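/- Let (R, ⊕, ·) be a semihyperring. Then R is regular if and only if for every right hyperideal I of R and every left hyperideal L of R, IL = I ∩ L, where IL = {x ∈ R : x ∈ a₁b₁ ⊕ ⋯ ⊕ aₚbₚ for some p ≥ 1, aᵢ ∈ I, bᵢ ∈ L}. -/
import Mathlib


/-- The unit interval `[0,1]` is a complete lattice. -/
noncomputable instance : Fact ((0:ℝ) ≤ 1) := ⟨zero_le_one⟩

/-- A semihyperring `(R, ⊕, ·)`: a hyperoperation `hadd` (with nonempty values),
a binary multiplication `mul`, and an element `zero`, satisfying commutativity and
(extended) associativity of `⊕`, associativity of `·`, two-sided distributivity of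
`·` over `⊕` (as sets), and `0 ⊕ x = {x}`, `0·x = 0 = x·0`. -/
class Semihyperring (R : Type*) where
  hadd : R → R → Set R
  mul : R → R → R
  zero : R
  hadd_nonempty : ∀ x y : R, (hadd x y).Nonempty
  hadd_comm : ∀ x y : R, hadd x y = hadd y x
  hadd_assoc : ∀ x y z : R, (⋃ w ∈ hadd y z, hadd x w) = ⋃ w ∈ hadd x y, hadd w z
  mul_assoc : ∀ x y z : R, mul (mul x y) z = mul x (mul y z)
  left_distrib : ∀ x y z : R, (fun w => mul x w) '' hadd y z = hadd (mul x y) (mul x z)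
  right_distrib : ∀ x y z : R, (fun w => mul w z) '' hadd x y = hadd (mul x z) (mul y z)
  zero_hadd : ∀ x : R, hadd zero x = {x}
  hadd_zero : ∀ x : R, hadd x zero = {x}
  zero_mul : ∀ x : R, mul zero x = zero
  mul_zero : ∀ x : R, mul x zero = zero

namespace Semihyperring

variable {R : Type*} [Semihyperring R]

/-- The hyperoperation `⊕` extended to subsets: `A ⊕ B = ⋃ {a ⊕ b : a ∈ A, b ∈ B}`. -/
def haddSet (A B : Set R) : Set R := ⋃ a ∈ A, ⋃ b ∈ B, hadd a b

/-- The hypersum `x₁ ⊕ x₂ ⊕ ⋯ ⊕ xₚ` of a list of elements (the empty hypersum is `{0}`,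
which is neutral since `0 ⊕ x = {x}`). -/
def hsumList : List R → Set R
  | [] => {zero}
  | x :: xs => haddSet {x} (hsumList xs)

/-- A (two-sided) hyperideal: a nonempty subset closed under `⊕` and under
multiplication by arbitrary elements of `R` on both sides. -/
def IsHyperideal (I : Set R) : Prop :=
  I.Nonempty ∧ (∀ x ∈ I, ∀ y ∈ I, hadd x y ⊆ I) ∧
    (∀ r : R, ∀ x ∈ I, mul r x ∈ I ∧ mul x r ∈ I)

/-- A right hyperideal. -/
def IsRightHyperideal (I : Set R) : Prop :=
  I.Nonempty ∧ (∀ x ∈ I, ∀ y ∈ I, hadd x y ⊆ I) ∧ (∀ x ∈ I, ∀ r : R, mul x r ∈ I)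

/-- A left hyperideal. -/
def IsLeftHyperideal (I : Set R) : Prop :=
  I.Nonempty ∧ (∀ x ∈ I, ∀ y ∈ I, hadd x y ⊆ I) ∧ (∀ x ∈ I, ∀ r : R, mul r x ∈ I)

/-- The product of two subsets:
`AB = {x : x ∈ a₁b₁ ⊕ ⋯ ⊕ aₚbₚ for some p ≥ 1, aᵢ ∈ A, bᵢ ∈ B}`. -/
def setProd (A B : Set R) : Set R :=
  {x | ∃ l : List (R × R), l ≠ [] ∧ (∀ p ∈ l, p.1 ∈ A ∧ p.2 ∈ B) ∧
    x ∈ hsumList (l.map fun p => mul p.1 p.2)}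

/-- `R` is fully idempotent if every hyperideal `I` satisfies `I² = I`. -/
def FullyIdempotent (R : Type*) [Semihyperring R] : Prop :=
  ∀ I : Set R, IsHyperideal I → setProd I I = I

/-- `R` is (von Neumann) regular if every `x` satisfies `x = x·a·x` for some `a`. -/
def Regular (R : Type*) [Semihyperring R] : Prop :=
  ∀ x : R, ∃ a : R, x = mul (mul x a) x

/-- A fuzzy hyperideal of `R`: a function `μ : R → [0,1]` with
`inf {μ z : z ∈ x ⊕ y} ≥ min (μ x) (μ y)` and `μ (x·y) ≥ max (μ x) (μ y)`. -/
def IsFuzzyHyperideal (μ : R → unitInterval) : Prop :=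
  (∀ x y : R, μ x ⊓ μ y ≤ ⨅ z ∈ hadd x y, μ z) ∧
  (∀ x y : R, μ x ⊔ μ y ≤ μ (mul x y))

/-- A fuzzy right hyperideal: `inf {λ z : z ∈ x ⊕ y} ≥ min (λ x) (λ y)` and `λ (x·y) ≥ λ x`. -/
def IsFuzzyRightHyperideal (μ : R → unitInterval) : Prop :=
  (∀ x y : R, μ x ⊓ μ y ≤ ⨅ z ∈ hadd x y, μ z) ∧
  (∀ x y : R, μ x ≤ μ (mul x y))

/-- A fuzzy left hyperideal: `inf {λ z : z ∈ x ⊕ y} ≥ min (λ x) (λ y)` and `λ (x·y) ≥ λ y`. -/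
def IsFuzzyLeftHyperideal (μ : R → unitInterval) : Prop :=
  (∀ x y : R, μ x ⊓ μ y ≤ ⨅ z ∈ hadd x y, μ z) ∧
  (∀ x y : R, μ y ≤ μ (mul x y))

/-- The product `λμ` of fuzzy subsets:
`(λμ)(x) = ⋁ { ⋀_{1≤i≤p} (λ yᵢ ⊓ μ zᵢ) : p ≥ 1, x ∈ y₁z₁ ⊕ ⋯ ⊕ yₚzₚ }`. -/
noncomputable def fprod (lam mu : R → unitInterval) (x : R) : unitInterval :=
  sSup {t | ∃ l : List (R × R), l ≠ [] ∧
    x ∈ hsumList (l.map fun p => mul p.1 p.2) ∧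
    t = ⨅ p ∈ l, lam p.1 ⊓ mu p.2}

/-- The sum `λ ⊕ μ` of fuzzy subsets:
`(λ ⊕ μ)(x) = ⋁ { λ y ⊓ μ z : x ∈ y ⊕ z }`. -/
noncomputable def fsum (lam mu : R → unitInterval) (x : R) : unitInterval :=
  sSup {t | ∃ y z : R, x ∈ hadd y z ∧ t = lam y ⊓ mu z}

/-- The composition `λ ∘ μ` of fuzzy subsets:
`(λ ∘ μ)(x) = ⋁ { λ y ⊓ μ z : x = y·z }` (with `⋁ ∅ = 0`). -/
noncomputable def fcomp (lam mu : R → unitInterval) (x : R) : unitInterval :=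
  sSup {t | ∃ y z : R, x = mul y z ∧ t = lam y ⊓ mu z}

/-- A fuzzy prime hyperideal: a fuzzy hyperideal `η` such that for all fuzzy hyperideals
`λ, μ`, `λμ ≤ η` implies `λ ≤ η` or `μ ≤ η`. -/
def IsFuzzyPrimeHyperideal (η : R → unitInterval) : Prop :=
  IsFuzzyHyperideal η ∧ ∀ lam mu : R → unitInterval, IsFuzzyHyperideal lam →
    IsFuzzyHyperideal mu → fprod lam mu ≤ η → lam ≤ η ∨ mu ≤ η

/-- A fuzzy irreducible hyperideal: a fuzzy hyperideal `η` such that for all fuzzy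
hyperideals `λ, μ`, `min (λ, μ) = η` (pointwise) implies `λ = η` or `μ = η`. -/
def IsFuzzyIrreducibleHyperideal (η : R → unitInterval) : Prop :=
  IsFuzzyHyperideal η ∧ ∀ lam mu : R → unitInterval, IsFuzzyHyperideal lam →
    IsFuzzyHyperideal mu → lam ⊓ mu = η → lam = η ∨ mu = η

/-- `FP R`: the set of proper fuzzy prime hyperideals of `R`
(`η` is proper if it is not the constant function `1`). -/
def FP (R : Type*) [Semihyperring R] : Set (R → unitInterval) :=
  {η | IsFuzzyPrimeHyperideal η ∧ η ≠ fun _ => 1}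

/-- `O λ = {μ ∈ FP R : λ ≰ μ}`. -/
def O (lam : R → unitInterval) : Set (R → unitInterval) :=
  {mu ∈ FP R | ¬ lam ≤ mu}

/-- The sum `Σᵢ ηᵢ` of an arbitrary family of fuzzy subsets:
`(Σᵢ ηᵢ)(x) = ⋁ { ⋀_{1≤k≤p} η_{i_k} (x_k) : p ≥ 1, x ∈ x₁ ⊕ ⋯ ⊕ xₚ }`. -/
noncomputable def famSum {ι : Type*} (η : ι → R → unitInterval) (x : R) : unitInterval :=
  sSup {t | ∃ l : List (ι × R), l ≠ [] ∧ x ∈ hsumList (l.map Prod.snd) ∧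
    t = ⨅ p ∈ l, η p.1 p.2}

end Semihyperring

section Aux
open Semihyperring
variable {R : Type*} [Semihyperring R]

lemma mem_haddSet {A B : Set R} {x : R} :
    x ∈ haddSet A B ↔ ∃ a ∈ A, ∃ b ∈ B, x ∈ hadd a b := by
  simp [haddSet]

lemma haddSet_zero_left (B : Set R) : haddSet ({zero} : Set R) B = B := by
  ext t; simp [haddSet, zero_hadd]

lemma hadd_assoc'' (a b c t : R) :
    (∃ w ∈ hadd a b, t ∈ hadd w c) ↔ ∃ w ∈ hadd b c, t ∈ hadd a w := by
  have h := Semihyperring.hadd_assoc a b c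
  constructor
  · rintro ⟨w, hw, ht⟩
    have : t ∈ ⋃ w ∈ hadd a b, hadd w c := Set.mem_biUnion hw ht
    rw [← h] at this; simpa using this
  · rintro ⟨w, hw, ht⟩
    have : t ∈ ⋃ w ∈ hadd b c, hadd a w := Set.mem_biUnion hw ht
    rw [h] at this; simpa using this

lemma haddSet_assoc (A B C : Set R) :
    haddSet (haddSet A B) C = haddSet A (haddSet B C) := by
  ext t
  simp only [mem_haddSet]
  constructor
  · rintro ⟨w, ⟨a, ha, b, hb, hwab⟩, c, hc, ht⟩
    obtain ⟨v, hv, htv⟩ := (hadd_assoc'' a b c t).1 ⟨w, hwab, ht⟩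
    exact ⟨a, ha, v, ⟨b, hb, c, hc, hv⟩, htv⟩
  · rintro ⟨a, ha, v, ⟨b, hb, c, hc, hvbc⟩, ht⟩
    obtain ⟨w, hw, htw⟩ := (hadd_assoc'' a b c t).2 ⟨v, hvbc, ht⟩
    exact ⟨w, ⟨a, ha, b, hb, hw⟩, c, hc, htw⟩

lemma hsumList_singleton (x : R) : hsumList [x] = {x} := by
  ext t; simp [hsumList, haddSet, hadd_zero]

lemma hsumList_append (l l' : List R) :
    hsumList (l ++ l') = haddSet (hsumList l) (hsumList l') := by
  induction l with
  | nil => simp [hsumList, haddSet_zero_left]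
  | cons x xs ih =>
    show hsumList (x :: (xs ++ l')) = _
    rw [show hsumList (x :: (xs ++ l')) = haddSet {x} (hsumList (xs ++ l')) from rfl,
      ih, ← haddSet_assoc]
    rfl

lemma hsumList_nonempty (l : List R) : (hsumList l).Nonempty := by
  induction l with
  | nil => exact ⟨zero, rfl⟩
  | cons x xs ih =>
    obtain ⟨b, hb⟩ := ih
    obtain ⟨t, ht⟩ := hadd_nonempty x b
    exact ⟨t, mem_haddSet.2 ⟨x, rfl, b, hb, ht⟩⟩

lemma hsumList_subset {T : Set R} (hT : ∀ a ∈ T, ∀ b ∈ T, hadd a b ⊆ T)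
    {l : List R} (hne : l ≠ []) (hl : ∀ a ∈ l, a ∈ T) : hsumList l ⊆ T := by
  induction l with
  | nil => simp at hne
  | cons x xs ih =>
    rcases xs with _ | ⟨y, ys⟩
    · rw [hsumList_singleton]
      intro t ht
      rw [Set.mem_singleton_iff] at ht; subst ht
      exact hl _ (by simp)
    · intro t ht
      rw [show hsumList (x :: y :: ys) = haddSet {x} (hsumList (y :: ys)) from rfl,
        mem_haddSet] at ht
      obtain ⟨a, ha, b, hb, htab⟩ := ht
      rcases ha with rfl
      have hb' : b ∈ T := ih (by simp) (fun a h => hl a (by simp [h])) hb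
      exact hT a (hl a (by simp)) b hb' htab

lemma hsumList_map_mulLeft (r : R) (l : List R) :
    hsumList (l.map (fun t => mul r t)) = (fun w => mul r w) '' hsumList l := by
  induction l with
  | nil => ext t; simp [hsumList, Semihyperring.mul_zero, eq_comm]
  | cons x xs ih =>
    show haddSet {mul r x} (hsumList (xs.map fun t => mul r t)) = _
    rw [ih]
    ext t
    simp only [mem_haddSet, Set.mem_singleton_iff, Set.mem_image]
    constructor
    · rintro ⟨a, rfl, b, ⟨s, hs, rfl⟩, ht⟩
      have := Semihyperring.left_distrib r x s
      have ht' : t ∈ (fun w => mul r w) '' hadd x s := by rw [this]; exact ht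
      obtain ⟨w, hw, rfl⟩ := ht'
      exact ⟨w, mem_haddSet.2 ⟨x, rfl, s, hs, hw⟩, rfl⟩
    · rintro ⟨w, hw, rfl⟩
      obtain ⟨a, ha, s, hs, hw'⟩ := mem_haddSet.1 hw
      rcases ha with rfl
      refine ⟨mul r a, rfl, mul r s, ⟨s, hs, rfl⟩, ?_⟩
      rw [← Semihyperring.left_distrib]
      exact ⟨w, hw', rfl⟩

lemma hsumList_map_mulRight (r : R) (l : List R) :
    hsumList (l.map (fun t => mul t r)) = (fun w => mul w r) '' hsumList l := by
  induction l with
  | nil => ext t; simp [hsumList, Semihyperring.zero_mul, eq_comm]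
  | cons x xs ih =>
    show haddSet {mul x r} (hsumList (xs.map fun t => mul t r)) = _
    rw [ih]
    ext t
    simp only [mem_haddSet, Set.mem_singleton_iff, Set.mem_image]
    constructor
    · rintro ⟨a, rfl, b, ⟨s, hs, rfl⟩, ht⟩
      have := Semihyperring.right_distrib x s r
      have ht' : t ∈ (fun w => mul w r) '' hadd x s := by rw [this]; exact ht
      obtain ⟨w, hw, rfl⟩ := ht'
      exact ⟨w, mem_haddSet.2 ⟨x, rfl, s, hs, hw⟩, rfl⟩
    · rintro ⟨w, hw, rfl⟩
      obtain ⟨a, ha, s, hs, hw'⟩ := mem_haddSet.1 hw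
      rcases ha with rfl
      refine ⟨mul a r, rfl, mul s r, ⟨s, hs, rfl⟩, ?_⟩
      rw [← Semihyperring.right_distrib]
      exact ⟨w, hw', rfl⟩

lemma list_map_of_forall {α β : Type*} {f : β → α} {l : List α}
    (h : ∀ t ∈ l, ∃ c, t = f c) : ∃ cs : List β, l = cs.map f := by
  induction l with
  | nil => exact ⟨[], rfl⟩
  | cons x xs ih =>
    obtain ⟨cs, hcs⟩ := ih (fun t ht => h t (by simp [ht]))
    obtain ⟨c, hc⟩ := h x (by simp)
    exact ⟨c :: cs, by simp [hc, hcs]⟩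

end Aux

section Aux2
open Semihyperring
variable {R : Type*} [Semihyperring R]

def genSum (G : Set R) : Set R :=
  {y | ∃ l : List R, l ≠ [] ∧ (∀ t ∈ l, t ∈ G) ∧ y ∈ hsumList l}

lemma mem_genSum_of_mem {G : Set R} {g : R} (hg : g ∈ G) : g ∈ genSum G :=
  ⟨[g], by simp, by simpa using hg, by rw [hsumList_singleton]; rfl⟩

lemma genSum_hadd_closed (G : Set R) :
    ∀ a ∈ genSum G, ∀ b ∈ genSum G, hadd a b ⊆ genSum G := by
  rintro a ⟨l, hne, hl, ha⟩ b ⟨l', hne', hl', hb⟩ t ht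
  refine ⟨l ++ l', by simp [hne], ?_, ?_⟩
  · intro u hu
    rcases List.mem_append.1 hu with h | h
    exacts [hl u h, hl' u h]
  · rw [hsumList_append]; exact mem_haddSet.2 ⟨a, ha, b, hb, ht⟩

lemma genSum_subset {G T : Set R} (hT : ∀ a ∈ T, ∀ b ∈ T, hadd a b ⊆ T)
    (hG : G ⊆ T) : genSum G ⊆ T := by
  rintro y ⟨l, hne, hl, hy⟩
  exact hsumList_subset hT hne (fun a ha => hG (hl a ha)) hy

lemma genSum_mul_right {G : Set R} (hG : ∀ t ∈ G, ∀ r : R, mul t r ∈ G) :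
    ∀ y ∈ genSum G, ∀ r : R, mul y r ∈ genSum G := by
  rintro y ⟨l, hne, hl, hy⟩ r
  refine ⟨l.map (fun t => mul t r), by simpa using hne, ?_, ?_⟩
  · intro u hu
    obtain ⟨t, ht, rfl⟩ := List.mem_map.1 hu
    exact hG t (hl t ht) r
  · rw [hsumList_map_mulRight]; exact ⟨y, hy, rfl⟩

lemma genSum_mul_left {G : Set R} (hG : ∀ t ∈ G, ∀ r : R, mul r t ∈ G) :
    ∀ y ∈ genSum G, ∀ r : R, mul r y ∈ genSum G := by
  rintro y ⟨l, hne, hl, hy⟩ r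
  refine ⟨l.map (fun t => mul r t), by simpa using hne, ?_, ?_⟩
  · intro u hu
    obtain ⟨t, ht, rfl⟩ := List.mem_map.1 hu
    exact hG t (hl t ht) r
  · rw [hsumList_map_mulLeft]; exact ⟨y, hy, rfl⟩

def GIx (x : R) : Set R := {t | t = x ∨ ∃ r, t = Semihyperring.mul x r}
def GLx (x : R) : Set R := {t | t = x ∨ ∃ r, t = Semihyperring.mul r x}
def GTx (x : R) : Set R :=
  {t | t = Semihyperring.mul x x ∨ ∃ c, t = Semihyperring.mul (Semihyperring.mul x c) x}
def GUx (x : R) : Set R := {t | ∃ c, t = Semihyperring.mul (Semihyperring.mul x c) x}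

end Aux2


open Semihyperring in
/-- `R` is regular iff `IL = I ∩ L` for every right hyperideal `I` and every
left hyperideal `L` of `R`. -/
theorem regular_iff_setProd_eq_inter (R : Type*) [Semihyperring R] :
    Regular R ↔ ∀ I L : Set R, IsRightHyperideal I → IsLeftHyperideal L →
      setProd I L = I ∩ L := by
  constructor
  · intro hreg I L hI hL
    ext x
    constructor
    · rintro ⟨l, hne, hmem, hx⟩
      constructor
      · refine hsumList_subset hI.2.1 (by simpa using hne) ?_ hx
        intro t ht
        obtain ⟨p, hp, rfl⟩ := List.mem_map.1 ht
        exact hI.2.2 p.1 (hmem p hp).1 p.2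
      · refine hsumList_subset hL.2.1 (by simpa using hne) ?_ hx
        intro t ht
        obtain ⟨p, hp, rfl⟩ := List.mem_map.1 ht
        exact hL.2.2 p.2 (hmem p hp).2 p.1
    · rintro ⟨hxI, hxL⟩
      obtain ⟨a, ha⟩ := hreg x
      refine ⟨[(mul x a, x)], by simp, ?_, ?_⟩
      · intro p hp
        simp only [List.mem_singleton] at hp
        subst hp
        exact ⟨hI.2.2 x hxI a, hxL⟩
      · show x ∈ hsumList [mul (mul x a) x]
        rw [hsumList_singleton]
        exact ha
  · intro h x
    have hIright : IsRightHyperideal (genSum (GIx x)) := by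
      refine ⟨⟨x, mem_genSum_of_mem (Or.inl rfl)⟩, genSum_hadd_closed (GIx x), ?_⟩
      refine genSum_mul_right ?_
      rintro t (rfl | ⟨r, rfl⟩) s
      · exact Or.inr ⟨s, rfl⟩
      · exact Or.inr ⟨mul r s, Semihyperring.mul_assoc x r s⟩
    have hLleft : IsLeftHyperideal (genSum (GLx x)) := by
      refine ⟨⟨x, mem_genSum_of_mem (Or.inl rfl)⟩, genSum_hadd_closed (GLx x), ?_⟩
      refine genSum_mul_left ?_
      rintro t (rfl | ⟨r, rfl⟩) s
      · exact Or.inr ⟨s, rfl⟩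
      · exact Or.inr ⟨mul s r, (Semihyperring.mul_assoc s r x).symm⟩
    have hxIL : x ∈ setProd (genSum (GIx x)) (genSum (GLx x)) := by
      rw [h _ _ hIright hLleft]
      exact ⟨mem_genSum_of_mem (Or.inl rfl), mem_genSum_of_mem (Or.inl rfl)⟩
    -- Step D: products land in genSum (GTx x)
    have hD : ∀ a ∈ genSum (GIx x), ∀ b ∈ genSum (GLx x), mul a b ∈ genSum (GTx x) := by
      rintro a ⟨la, hlane, hla, ha⟩ b hb
      -- first: for t ∈ (GIx x), mul t b ∈ genSum (GTx x)
      have key : ∀ t ∈ (GIx x), mul t b ∈ genSum (GTx x) := by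
        intro t ht
        obtain ⟨lb, hlbne, hlb, hbmem⟩ := hb
        refine ⟨lb.map (fun u => mul t u), by simpa using hlbne, ?_, ?_⟩
        · intro v hv
          obtain ⟨u, hu, rfl⟩ := List.mem_map.1 hv
          rcases ht with h1 | ⟨r, h1⟩ <;> rcases hlb u hu with h2 | ⟨s, h2⟩ <;>
            rw [h1, h2]
          · exact Or.inl rfl
          · exact Or.inr ⟨s, (Semihyperring.mul_assoc x s x).symm⟩
          · exact Or.inr ⟨r, rfl⟩
          · refine Or.inr ⟨mul r s, ?_⟩
            rw [Semihyperring.mul_assoc x (mul r s) x, Semihyperring.mul_assoc r s x]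
            exact Semihyperring.mul_assoc x r (mul s x)
        · rw [hsumList_map_mulLeft]; exact ⟨b, hbmem, rfl⟩
      -- now expand a
      have : mul a b ∈ hsumList (la.map (fun t => mul t b)) := by
        rw [hsumList_map_mulRight]; exact ⟨a, ha, rfl⟩
      refine hsumList_subset (genSum_hadd_closed (GTx x)) (by simpa using hlane) ?_ this
      intro v hv
      obtain ⟨t, ht, rfl⟩ := List.mem_map.1 hv
      exact key t (hla t ht)
    -- Step E: x ∈ genSum (GTx x)
    have hxT : x ∈ genSum (GTx x) := by
      obtain ⟨lp, hlpne, hlp, hxmem⟩ := hxIL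
      refine hsumList_subset (genSum_hadd_closed (GTx x)) (by simpa using hlpne) ?_ hxmem
      intro v hv
      obtain ⟨p, hp, rfl⟩ := List.mem_map.1 hv
      exact hD p.1 (hlp p hp).1 p.2 (hlp p hp).2
    -- Step F: x ∈ genSum (GUx x)
    have hxx : mul x x ∈ genSum (GUx x) := by
      obtain ⟨l0, hl0ne, hl0, hx0⟩ := hxT
      refine ⟨l0.map (fun t => mul x t), by simpa using hl0ne, ?_, ?_⟩
      · intro v hv
        obtain ⟨t, ht, rfl⟩ := List.mem_map.1 hv
        rcases hl0 t ht with rfl | ⟨c, rfl⟩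
        · exact ⟨x, (Semihyperring.mul_assoc x x x).symm⟩
        · exact ⟨mul x c, by rw [Semihyperring.mul_assoc x (mul x c) x]⟩
      · rw [hsumList_map_mulLeft]; exact ⟨x, hx0, rfl⟩
    have hxU : x ∈ genSum (GUx x) := by
      refine genSum_subset (genSum_hadd_closed (GUx x)) ?_ hxT
      rintro t (rfl | ⟨c, rfl⟩)
      · exact hxx
      · exact mem_genSum_of_mem ⟨c, rfl⟩
    -- Step G: extract a
    obtain ⟨l, hlne, hl, hxl⟩ := hxU
    obtain ⟨cs, rfl⟩ := list_map_of_forall (f := fun c => mul (mul x c) x) hl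
    have heq : cs.map (fun c => mul (mul x c) x)
        = (cs.map (fun c => mul x c)).map (fun w => mul w x) := by
      rw [List.map_map]; rfl
    rw [heq, hsumList_map_mulRight, hsumList_map_mulLeft] at hxl
    obtain ⟨v, ⟨w, hw, rfl⟩, hx1⟩ := hxl
    exact ⟨w, hx1.symm⟩
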